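/- Let μ be a nonzero complex number with argument α satisfying π/n ≤ |α| (α ∈ (−π, π], n ≥ 1). Then there exists a multiset Λ = {λ₁, ..., λₙ} of complex numbers containing −μ such that the monic polynomial ∏_{k=1}^n (t + λ_k) has nonnegative real coefficients and nonzero constant term. -/

import Mathlib

open Real Polynomial

private lemma coeff_mul_nonneg' {p q : Polynomial ℝ} (hp : ∀ i, 0 ≤ p.coeff i)
    (hq : ∀ i, 0 ≤ q.coeff i) : ∀ i, 0 ≤ (p * q).coeff i := by
  intro i
  rw [Polynomial.coeff_mul]
  exact Finset.sum_nonneg fun x _ => mul_nonneg (hp _) (hq _)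

private lemma coeff_pow_nonneg' {p : Polynomial ℝ} (hp : ∀ i, 0 ≤ p.coeff i) (m : ℕ) :
    ∀ i, 0 ≤ (p ^ m).coeff i := by
  induction m with
  | zero =>
      intro i
      simp only [pow_zero, Polynomial.coeff_one]
      split_ifs <;> norm_num
  | succ m ih =>
      rw [pow_succ]
      exact coeff_mul_nonneg' ih hp

private lemma build (n : ℕ) (q : Polynomial ℝ) (hq : q.Monic) (hdeg : q.natDegree = n)
    (hcoeff : ∀ i, 0 ≤ q.coeff i) (h0 : q.coeff 0 ≠ 0) (μ : ℂ)
    (hroot : (q.map (algebraMap ℝ ℂ)).eval μ = 0) :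
    ∃ lam : Fin n → ℂ, (∃ k : Fin n, lam k = -μ) ∧
      (∀ i, ((∏ k : Fin n, (X + C (lam k))).coeff i).im = 0 ∧
        0 ≤ ((∏ k : Fin n, (X + C (lam k))).coeff i).re) ∧
      (∏ k : Fin n, (X + C (lam k))).eval 0 ≠ 0 := by
  set P : Polynomial ℂ := q.map (algebraMap ℝ ℂ) with hP
  have hPm : P.Monic := hq.map _
  have hPdeg : P.natDegree = n := by
    rw [hP, q.natDegree_map_eq_of_injective (algebraMap ℝ ℂ).injective, hdeg]
  have hsplits : P.Splits := IsAlgClosed.splits P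
  have hcard : P.roots.card = n := by
    rw [← hPdeg]
    exact (Polynomial.splits_iff_card_roots).mp hsplits
  have hfact : P = (P.roots.map fun a => X - C a).prod :=
    (hsplits.eq_prod_roots_of_monic hPm)
  have hμroots : μ ∈ P.roots := by
    rw [Polynomial.mem_roots hPm.ne_zero]
    exact hroot
  set l : List ℂ := P.roots.toList with hldef
  have hlen : l.length = n := by rw [hldef, Multiset.length_toList, hcard]
  have hμl : μ ∈ l := by rw [hldef]; exact (Multiset.mem_toList).mpr hμroots
  have hl : (P.roots : Multiset ℂ) = ↑l := by rw [hldef, Multiset.coe_toList]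
  have hprod : (∏ i : Fin n, (X + C (-(l.get (Fin.cast hlen.symm i))))) = P := by
    have h1 : (∏ i : Fin n, (X + C (-(l.get (Fin.cast hlen.symm i)))))
        = ∏ i : Fin n, ((fun a => X - C a) (l.get (Fin.cast hlen.symm i))) := by
      refine Finset.prod_congr rfl fun i _ => ?_
      simp [sub_eq_add_neg]
    rw [h1, Fin.prod_congr' (fun i : Fin l.length => (fun a => X - C a) (l.get i)) hlen.symm]
    rw [hfact, hl, Multiset.map_coe, Multiset.prod_coe]
    conv_rhs => rw [← List.ofFn_get l, List.map_ofFn]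
    rw [List.prod_ofFn]
    rfl
  refine ⟨fun i => -(l.get (Fin.cast hlen.symm i)), ?_, ?_, ?_⟩
  · have hidx : l.idxOf μ < l.length := List.idxOf_lt_length_iff.mpr hμl
    refine ⟨⟨l.idxOf μ, hlen ▸ hidx⟩, ?_⟩
    simp only [Fin.cast]
    rw [List.idxOf_get hidx]
  · intro i
    rw [hprod, hP, Polynomial.coeff_map]
    constructor
    · simp
    · simpa using hcoeff i
  · rw [hprod, ← Polynomial.coeff_zero_eq_eval_zero, hP, Polynomial.coeff_map]
    simpa using h0

private lemma root_eq' (K : ℕ) (hK : 1 ≤ K) (a r : ℝ) (hs : Real.sin a ≠ 0) :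
    ((r:ℂ) * Complex.exp (a * Complex.I))^K
      + ((-Real.sin (K*a)/Real.sin a * r^(K-1) : ℝ) : ℂ) * ((r:ℂ) * Complex.exp (a * Complex.I))
      + ((Real.sin (((K-1:ℕ):ℝ)*a)/Real.sin a * r^K : ℝ) : ℂ) = 0 := by
  have h1 : (((K-1:ℕ):ℝ) * a) = ((K:ℝ)*a - a) := by
    push_cast [Nat.cast_sub hK]; ring
  have hrK : (r:ℂ) ^ (K-1) * r = (r:ℂ) ^ K := by
    rw [← pow_succ]; congr 1; omega
  have hexpK : Complex.exp (↑a * Complex.I) ^ K = Complex.exp (((K:ℂ)*↑a) * Complex.I) := by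
    rw [← Complex.exp_nat_mul]; ring_nf
  have hsC : Complex.sin ↑a ≠ 0 := by
    rw [← Complex.ofReal_sin]; exact Complex.ofReal_ne_zero.mpr hs
  have hkey : Complex.sin ((K:ℂ)*↑a - ↑a)
      = Complex.sin ((K:ℂ)*↑a) * Complex.cos ↑a - Complex.cos ((K:ℂ)*↑a) * Complex.sin ↑a :=
    Complex.sin_sub _ _
  rw [mul_pow, hexpK, Complex.exp_mul_I, Complex.exp_mul_I, h1]
  push_cast
  field_simp
  linear_combination ((r:ℂ)^K) * hkey
    - (Complex.sin ((K:ℂ)*↑a) * (Complex.I * Complex.sin ↑a + Complex.cos ↑a)) * hrK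
    + ((r:ℂ)^K) * congrArg Complex.sin (by ring : (a:ℂ)*((K:ℂ)-1) = (K:ℂ)*a - a)

theorem stmt_13 (n : ℕ) (hn : 1 ≤ n) (r : ℝ) (hr : 0 < r) (α : ℝ)
    (hα : α ∈ Set.Ioc (-π) π) (hαn : π / n ≤ |α|)
    (μ : ℂ) (hμ : μ = (r : ℂ) * (Complex.cos α + Complex.sin α * Complex.I)) :
    ∃ lam : Fin n → ℂ, (∃ k : Fin n, lam k = -μ) ∧
      (∀ i, ((∏ k : Fin n, (X + C (lam k))).coeff i).im = 0 ∧
        0 ≤ ((∏ k : Fin n, (X + C (lam k))).coeff i).re) ∧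
      (∏ k : Fin n, (X + C (lam k))).eval 0 ≠ 0 := by
  have hn' : (0:ℝ) < n := by exact_mod_cast hn
  have hπn : 0 < π / n := div_pos Real.pi_pos hn'
  have ha0 : 0 < |α| := lt_of_lt_of_le hπn hαn
  have haπ' : |α| ≤ π := abs_le.mpr ⟨hα.1.le, hα.2⟩
  have hμexp : μ = (r:ℂ) * Complex.exp (α * Complex.I) := by
    rw [hμ, Complex.exp_mul_I]
  by_cases hcase : |α| = π
  · -- boundary case α = π, μ = -r
    have hαπ : α = π := by
      rcases (abs_eq Real.pi_pos.le).mp hcase with h | h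
      · exact h
      · exact absurd hα.1 (by rw [h]; exact lt_irrefl _)
    have hμr : μ = -(r:ℂ) := by
      rw [hμ, hαπ, ← Complex.ofReal_cos, ← Complex.ofReal_sin]
      simp [Real.cos_pi, Real.sin_pi]
    have hXr : ∀ i, 0 ≤ (X + C r : Polynomial ℝ).coeff i := by
      intro i
      simp only [Polynomial.coeff_add, Polynomial.coeff_X, Polynomial.coeff_C]
      split_ifs <;> norm_num <;> linarith
    refine build n ((X + C r)^n) ((monic_X_add_C r).pow n) ?_ (coeff_pow_nonneg' hXr n) ?_ μ ?_
    · rw [Polynomial.natDegree_pow, Polynomial.natDegree_X_add_C, mul_one]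
    · rw [Polynomial.coeff_zero_eq_eval_zero]
      simp only [Polynomial.eval_pow, Polynomial.eval_add, Polynomial.eval_X,
        Polynomial.eval_C, zero_add]
      positivity
    · rw [Polynomial.map_pow, Polynomial.map_add, Polynomial.map_X, Polynomial.map_C]
      simp only [Polynomial.eval_pow, Polynomial.eval_add, Polynomial.eval_X, Polynomial.eval_C]
      rw [hμr]
      simp only [Complex.coe_algebraMap]
      rw [neg_add_cancel]
      exact zero_pow (by omega)
  · -- main case 0 < |α| < π
    have haπ : |α| < π := lt_of_le_of_ne haπ' hcase
    have hsin : 0 < Real.sin |α| := Real.sin_pos_of_pos_of_lt_pi ha0 haπ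
    set K : ℕ := ⌈π / |α|⌉₊ with hKdef
    have hx1 : (1:ℝ) < π / |α| := (one_lt_div ha0).mpr haπ
    have hK2 : 2 ≤ K := by
      have : (1:ℕ) < K := Nat.lt_ceil.mpr (by exact_mod_cast hx1)
      omega
    have hK1 : 1 ≤ K := by omega
    have hKle : π / |α| ≤ (K:ℝ) := Nat.le_ceil _
    have hKn : K ≤ n := by
      refine Nat.ceil_le.mpr ?_
      rw [div_le_iff₀ ha0]
      have := (div_le_iff₀ hn').mp hαn
      linarith
    have hKa : π ≤ (K:ℝ) * |α| := by
      have := (div_le_iff₀ ha0).mp hKle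
      linarith
    have hcast : ((K-1:ℕ):ℝ) = (K:ℝ) - 1 := by
      push_cast [Nat.cast_sub hK1]; ring
    have hK1a : ((K-1:ℕ):ℝ) * |α| < π := by
      rw [hcast]
      have : ((K:ℝ) - 1) < π / |α| := by
        have := Nat.ceil_lt_add_one (le_of_lt (lt_trans one_pos hx1)) (R := ℝ) (a := π / |α|)
        rw [← hKdef] at this
        linarith
      calc ((K:ℝ) - 1) * |α| < (π / |α|) * |α| := by
            apply mul_lt_mul_of_pos_right this ha0
      _ = π := by field_simp
    have hK1a0 : 0 < ((K-1:ℕ):ℝ) * |α| := by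
      apply mul_pos _ ha0
      rw [hcast]
      have : (2:ℝ) ≤ (K:ℝ) := by exact_mod_cast hK2
      linarith
    have hKa2 : (K:ℝ) * |α| ≤ 2 * π := by
      have : (K:ℝ) * |α| = ((K-1:ℕ):ℝ) * |α| + |α| := by rw [hcast]; ring
      linarith
    have hsinK : Real.sin ((K:ℝ) * |α|) ≤ 0 := by
      have h := Real.sin_nonneg_of_nonneg_of_le_pi (x := (K:ℝ)*|α| - π)
        (by linarith) (by linarith)
      rw [Real.sin_sub, Real.sin_pi, Real.cos_pi] at h
      nlinarith
    have hsinK1 : 0 < Real.sin (((K-1:ℕ):ℝ) * |α|) :=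
      Real.sin_pos_of_pos_of_lt_pi hK1a0 hK1a
    set b : ℝ := -Real.sin ((K:ℝ)*|α|)/Real.sin |α| * r^(K-1) with hbdef
    set c : ℝ := Real.sin (((K-1:ℕ):ℝ)*|α|)/Real.sin |α| * r^K with hcdef
    have hb : 0 ≤ b := by
      apply mul_nonneg (div_nonneg (by linarith) hsin.le) (pow_nonneg hr.le _)
    have hc : 0 < c := by
      apply mul_pos (div_pos hsinK1 hsin) (pow_pos hr _)
    have hsinα : Real.sin α ≠ 0 := by
      rcases abs_choice α with h | h
      · rw [← h]; exact ne_of_gt hsin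
      · rw [h, Real.sin_neg] at hsin
        intro h0
        rw [h0] at hsin
        simp at hsin
    have hbeq : b = -Real.sin ((K:ℝ)*α)/Real.sin α * r^(K-1) := by
      rcases abs_choice α with h | h
      · rw [hbdef, h]
      · rw [hbdef, h]
        rw [mul_neg, Real.sin_neg, Real.sin_neg, neg_neg, div_neg, neg_div]
    have hceq : c = Real.sin (((K-1:ℕ):ℝ)*α)/Real.sin α * r^K := by
      rcases abs_choice α with h | h
      · rw [hcdef, h]
      · rw [hcdef, h]
        rw [mul_neg, Real.sin_neg, Real.sin_neg, div_neg, neg_div, neg_neg]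
    have hA : ∀ i, 0 ≤ (X^K + C b * X + C c : Polynomial ℝ).coeff i := by
      intro i
      simp only [Polynomial.coeff_add, Polynomial.coeff_X_pow, Polynomial.coeff_C_mul,
        Polynomial.coeff_X, Polynomial.coeff_C, mul_ite, mul_one, mul_zero]
      split_ifs <;> norm_num <;> linarith
    have hdlin : (C b * X + C c : Polynomial ℝ).degree < ((K:ℕ) : WithBot ℕ) := by
      refine lt_of_le_of_lt (Polynomial.degree_linear_le) ?_
      exact_mod_cast (by omega : 1 < K)
    have hAm : (X^K + C b * X + C c : Polynomial ℝ).Monic := by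
      rw [add_assoc]
      exact Polynomial.monic_X_pow_add hdlin
    have hAdeg : (X^K + C b * X + C c : Polynomial ℝ).natDegree = K := by
      apply Polynomial.natDegree_eq_of_degree_eq_some
      rw [add_assoc]
      rw [Polynomial.degree_add_eq_left_of_degree_lt, Polynomial.degree_X_pow]
      rw [Polynomial.degree_X_pow]
      exact hdlin
    refine build n ((X^K + C b * X + C c) * (X + C r)^(n-K)) ?_ ?_ ?_ ?_ μ ?_
    · exact hAm.mul ((monic_X_add_C r).pow _)
    · rw [hAm.natDegree_mul ((monic_X_add_C r).pow _), hAdeg,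
        Polynomial.natDegree_pow, Polynomial.natDegree_X_add_C, mul_one]
      omega
    · apply coeff_mul_nonneg' hA
      apply coeff_pow_nonneg'
      intro i
      simp only [Polynomial.coeff_add, Polynomial.coeff_X, Polynomial.coeff_C]
      split_ifs <;> norm_num <;> linarith
    · rw [Polynomial.coeff_zero_eq_eval_zero]
      simp only [Polynomial.eval_mul, Polynomial.eval_add, Polynomial.eval_pow,
        Polynomial.eval_X, Polynomial.eval_C, zero_add, mul_zero]
      rw [zero_pow (by omega : K ≠ 0)]
      positivity
    · simp only [Polynomial.map_mul, Polynomial.map_add, Polynomial.map_pow,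
        Polynomial.map_X, Polynomial.map_C, Polynomial.eval_mul]
      apply mul_eq_zero_of_left
      simp only [Polynomial.eval_add, Polynomial.eval_pow, Polynomial.eval_mul,
        Polynomial.eval_X, Polynomial.eval_C, Complex.coe_algebraMap]
      rw [hbeq, hceq, hμexp]
      exact root_eq' K hK1 α r hsinα
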